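/- For t = (17/20, 3/40, 3/40) and M = 20, the M-type distribution p = (16/20, 2/20, 2/20) achieves strictly smaller D(t‖p) than every M-type distribution q with q_1 ≥ ⌊M t_1⌋/M = 17/20. In particular, the optimal M-type approximation minimizing D(t‖·) satisfies p_1 < ⌊M t_1⌋/M. -/

import Mathlib

open Finset

/-- Informational divergence D(t‖p) with the convention D = ⊤ if some t i > 0 but p i = 0. -/
noncomputable def Dkl {n : ℕ} (t p : Fin n → ℝ) : EReal :=
  if ∀ i, 0 < t i → 0 < p i then
    ((∑ i, if 0 < t i then t i * Real.log (t i / p i) else 0 : ℝ) : EReal)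
  else ⊤

lemma Dkl3 (t q : Fin 3 → ℝ) (h0 : 0 < t 0) (h1 : 0 < t 1) (h2 : 0 < t 2)
    (hq0 : 0 < q 0) (hq1 : 0 < q 1) (hq2 : 0 < q 2) :
    Dkl t q = ((t 0 * Real.log (t 0 / q 0) + t 1 * Real.log (t 1 / q 1)
      + t 2 * Real.log (t 2 / q 2) : ℝ) : EReal) := by
  rw [Dkl, if_pos]
  · congr 1
    rw [Fin.sum_univ_three, if_pos h0, if_pos h1, if_pos h2]
  · intro i _; fin_cases i <;> assumption

lemma Dkl_top (t q : Fin 3 → ℝ) (i : Fin 3) (hti : 0 < t i) (hqi : q i ≤ 0) :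
    Dkl t q = ⊤ := by
  rw [Dkl, if_neg]
  push_neg
  exact ⟨i, hti, hqi⟩

lemma L1 : (17/20:ℝ) * Real.log (17/16) < 3/40 * Real.log 2 := by
  have h : Real.log ((17/16:ℝ)^34) < Real.log (2^3) :=
    Real.log_lt_log (by positivity) (by norm_num)
  rw [Real.log_pow, Real.log_pow] at h
  push_cast at h
  linarith

lemma L2 : (17/20:ℝ) * Real.log (9/8) < 3/20 * Real.log 2 := by
  have h : Real.log ((9/8:ℝ)^17) < Real.log (2^3) :=
    Real.log_lt_log (by positivity) (by norm_num)
  rw [Real.log_pow, Real.log_pow] at h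
  push_cast at h
  linarith

lemma hlog32 : Real.log (3/2:ℝ) = Real.log (3/4) + Real.log 2 := by
  rw [show (3/2:ℝ) = (3/4)*2 by norm_num, Real.log_mul (by norm_num) (by norm_num)]

lemma hlog17 : Real.log (17/16:ℝ) = Real.log (17/18) + Real.log (9/8) := by
  rw [show (17/16:ℝ) = (17/18)*(9/8) by norm_num, Real.log_mul (by norm_num) (by norm_num)]

theorem rounding_off_fails
    (t : Fin 3 → ℝ) (ht : t = ![17 / 20, 3 / 40, 3 / 40])
    (p : Fin 3 → ℝ) (hp : p = ![16 / 20, 2 / 20, 2 / 20]) :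
    (∀ c : Fin 3 → ℕ, ∑ i, c i = 20 → (17 / 20 : ℝ) ≤ (c 0 : ℝ) / 20 →
        Dkl t p < Dkl t (fun i => (c i : ℝ) / 20)) ∧
      ∀ c : Fin 3 → ℕ, ∑ i, c i = 20 →
        (∀ c' : Fin 3 → ℕ, ∑ i, c' i = 20 →
          Dkl t (fun i => (c i : ℝ) / 20) ≤ Dkl t (fun i => (c' i : ℝ) / 20)) →
        (c 0 : ℝ) / 20 < 17 / 20 := by
  subst ht hp
  have ht0 : (0:ℝ) < ![17/20, 3/40, 3/40] 0 := by norm_num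
  have ht1 : (0:ℝ) < ![17/20, (3:ℝ)/40, 3/40] 1 := by norm_num
  have ht2 : (0:ℝ) < ![17/20, (3:ℝ)/40, 3/40] 2 := by show (0:ℝ) < 3/40; norm_num
  have hDp : Dkl ![17/20, 3/40, 3/40] ![16/20, 2/20, 2/20]
      = ((17/20 * Real.log ((17/20)/(16/20)) + 3/40 * Real.log ((3/40)/(2/20))
        + 3/40 * Real.log ((3/40)/(2/20)) : ℝ) : EReal) := by
    rw [Dkl3 _ _ ht0 ht1 ht2 (by norm_num) (by norm_num) (by show (0:ℝ) < 2/20; norm_num)]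
    norm_num [show ![(17:ℝ)/20, 3/40, 3/40] 2 = 3/40 from rfl, show ![(16:ℝ)/20, 2/20, 2/20] 2 = 2/20 from rfl, show ![(4:ℝ)/5, 1/10, 1/10] 2 = 1/10 from rfl]
  have main : ∀ c : Fin 3 → ℕ, ∑ i, c i = 20 → (17 / 20 : ℝ) ≤ (c 0 : ℝ) / 20 →
      Dkl ![17/20, 3/40, 3/40] ![16/20, 2/20, 2/20]
        < Dkl ![17/20, 3/40, 3/40] (fun i => (c i : ℝ) / 20) := by
    intro c hsum hge
    rw [Fin.sum_univ_three] at hsum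
    have h17 : 17 ≤ c 0 := by
      have : (17:ℝ) ≤ (c 0 : ℝ) := by linarith
      exact_mod_cast this
    -- zero-entry cases
    by_cases hz1 : c 1 = 0
    · rw [hDp, Dkl_top _ _ 1 ht1 (by simp [hz1])]
      exact EReal.coe_lt_top _
    by_cases hz2 : c 2 = 0
    · rw [hDp, Dkl_top _ _ 2 ht2 (by simp [hz2])]
      exact EReal.coe_lt_top _
    have hcase : (c 0 = 17 ∧ c 1 = 1 ∧ c 2 = 2) ∨ (c 0 = 17 ∧ c 1 = 2 ∧ c 2 = 1)
        ∨ (c 0 = 18 ∧ c 1 = 1 ∧ c 2 = 1) := by omega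
    have hq0 : (0:ℝ) < (c 0 : ℝ)/20 := by positivity
    have hq1 : (0:ℝ) < (c 1 : ℝ)/20 := by
      have : 0 < c 1 := Nat.pos_of_ne_zero hz1
      positivity
    have hq2 : (0:ℝ) < (c 2 : ℝ)/20 := by
      have : 0 < c 2 := Nat.pos_of_ne_zero hz2
      positivity
    rw [hDp, Dkl3 _ _ ht0 ht1 ht2 hq0 hq1 hq2]
    rw [EReal.coe_lt_coe_iff]
    have e0 : ![(17:ℝ)/20, 3/40, 3/40] 0 = 17/20 := rfl
    have e1 : ![(17:ℝ)/20, 3/40, 3/40] 1 = 3/40 := rfl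
    have e2 : ![(17:ℝ)/20, 3/40, 3/40] 2 = 3/40 := rfl
    rw [e0, e1, e2]
    rcases hcase with ⟨h0, h1, h2⟩ | ⟨h0, h1, h2⟩ | ⟨h0, h1, h2⟩ <;>
      rw [h0, h1, h2] <;> push_cast <;> norm_num <;>
      [skip; skip; skip]
    · -- (17,1,2): 17/20 log(17/16) + 2*(3/40) log(3/4) < 3/40 log(3/2) + 3/40 log(3/4)
      have := L1; have := hlog32
      linarith
    · have := L1; have := hlog32
      linarith
    · have := L2; have := hlog32; have := hlog17
      linarith
  refine ⟨main, ?_⟩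
  intro c hsum hmin
  by_contra h
  push_neg at h
  have h2 := main c hsum h
  have hsum' : ∑ i, (![16, 2, 2] : Fin 3 → ℕ) i = 20 := by decide
  have hfun : (fun i => ((![16, 2, 2] : Fin 3 → ℕ) i : ℝ) / 20) = ![16/20, 2/20, 2/20] := by
    funext i; fin_cases i <;> norm_num
  have := hmin ![16, 2, 2] hsum'
  rw [hfun] at this
  exact absurd (lt_of_lt_of_le h2 this) (lt_irrefl _)
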